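/- Let p be a projection, e an effect, and α a real number with α > 0 and pep = α·p. Set a := α⁻¹(pep⊥ + p⊥ep), y := p⊥(1 − a), and y* := (1 − a)p⊥ (the adjoint of y). Then: (i) for every f with 0 ≤ f ≤ p⊥ one has y f y* = f; (ii) y e y* = e − α⁻¹ e p e, and in particular 0 ≤ e − α⁻¹ e p e. -/

import Mathlib

/-- In a unital C*-algebra, let `p` be a projection, `e` an effect, and
`α` a real number with `α > 0` and `pep = α • p`.  Set
`a := α⁻¹ • (pep⊥ + p⊥ep)`, `y := p⊥(1 − a)`, and `y* := (1 − a)p⊥`. Then: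
(i) for every `f` with `0 ≤ f ≤ p⊥` one has `y f y* = f`;
(ii) `y e y* = e − α⁻¹ • (epe)`, and in particular `0 ≤ e − α⁻¹ • (epe)`. -/
theorem stmt18 {A : Type*} [CStarAlgebra A] [PartialOrder A] [StarOrderedRing A]
    (p e : A) (hp : IsSelfAdjoint p) (hp2 : p ^ 2 = p)
    (he0 : 0 ≤ e) (he1 : e ≤ 1)
    (α : ℝ) (hα : 0 < α) (hpep : p * e * p = α • p)
    (a y ystar : A)
    (ha : a = α⁻¹ • (p * e * (1 - p) + (1 - p) * e * p))
    (hy : y = (1 - p) * (1 - a)) (hystar : ystar = (1 - a) * (1 - p)) :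
    (∀ f : A, 0 ≤ f → f ≤ 1 - p → y * f * ystar = f) ∧
    y * e * ystar = e - α⁻¹ • (e * p * e) ∧
    0 ≤ e - α⁻¹ • (e * p * e) := by
  have hα0 : α ≠ 0 := ne_of_gt hα
  have hpp : p * p = p := by rw [← pow_two]; exact hp2
  have hqp : (1 - p) * p = 0 := by rw [sub_mul, one_mul, hpp, sub_self]
  have hpq : p * (1 - p) = 0 := by rw [mul_sub, mul_one, hpp, sub_self]
  have hq : (1 - p) * (1 - p) = 1 - p := by rw [mul_sub, mul_one, hqp, sub_zero]
  have he : IsSelfAdjoint e := IsSelfAdjoint.of_nonneg he0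
  have hy' : y = (1 - p) - α⁻¹ • ((1 - p) * e * p) := by
    rw [hy, ha]
    simp only [mul_sub, mul_one, mul_smul_comm, mul_add, ← mul_assoc, hqp, hq, zero_mul,
      zero_add, sub_self]
  have hystar' : ystar = (1 - p) - α⁻¹ • (p * e * (1 - p)) := by
    rw [hystar, ha]
    simp only [sub_mul, one_mul, smul_mul_assoc, add_mul, mul_assoc, hpq, hq, mul_zero,
      sub_self, add_zero, mul_one]
  -- part (i)
  have part1 : ∀ f : A, 0 ≤ f → f ≤ 1 - p → y * f * ystar = f := by
    intro f hf0 hf1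
    have hpfp : p * f * p = 0 := by
      have hub : p * f * p ≤ 0 := by
        have h := star_right_conjugate_le_conjugate hf1 p
        rw [hp.star_eq] at h
        calc p * f * p ≤ p * (1 - p) * p := h
          _ = 0 := by rw [hpq, zero_mul]
      have hlb : 0 ≤ p * f * p := by
        have h := star_right_conjugate_nonneg hf0 p
        rwa [hp.star_eq] at h
      exact le_antisymm hub hlb
    have hfp : f * p = 0 := by
      have hsq : CFC.sqrt f * p = 0 := by
        have h0 : star (CFC.sqrt f * p) * (CFC.sqrt f * p) = 0 := by
          rw [star_mul, hp.star_eq,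
            (IsSelfAdjoint.of_nonneg (CFC.sqrt_nonneg (a := f))).star_eq]
          calc p * CFC.sqrt f * (CFC.sqrt f * p)
              = p * (CFC.sqrt f * CFC.sqrt f) * p := by simp only [mul_assoc]
            _ = p * f * p := by rw [CFC.sqrt_mul_sqrt_self f hf0]
            _ = 0 := hpfp
        exact (CStarRing.star_mul_self_eq_zero_iff _).mp h0
      calc f * p = CFC.sqrt f * (CFC.sqrt f * p) := by
            rw [← mul_assoc, CFC.sqrt_mul_sqrt_self f hf0]
        _ = 0 := by rw [hsq, mul_zero]
    have hpf : p * f = 0 := by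
      have h := congrArg star hfp
      simpa [star_mul, hp.star_eq, (IsSelfAdjoint.of_nonneg hf0).star_eq] using h
    have h3 : y * f = f := by
      rw [hy', sub_mul, smul_mul_assoc, sub_mul, one_mul, mul_assoc ((1 - p) * e) p f, hpf,
        mul_zero, smul_zero, sub_zero, sub_zero]
    have h4 : f * ystar = f := by
      rw [hystar', mul_sub, mul_smul_comm, mul_sub, mul_one, ← mul_assoc, ← mul_assoc, hfp,
        zero_mul, zero_mul, smul_zero, sub_zero, sub_zero]
    calc y * f * ystar = y * (f * ystar) := mul_assoc _ _ _
      _ = y * f := by rw [h4]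
      _ = f := h3
  -- part (ii): main identity
  have hqep : (1 - p) * e * p = e * p - α • p := by
    rw [sub_mul, one_mul, sub_mul, hpep]
  have key : y * e * ystar = e - α⁻¹ • (e * p * e) := by
    rw [hy', hystar']
    have expand : ((1 - p) - α⁻¹ • ((1 - p) * e * p)) * e * ((1 - p) - α⁻¹ • (p * e * (1 - p)))
        = (1 - p) * e * (1 - p) - α⁻¹ • ((1 - p) * e * (p * e * (1 - p)))
          - α⁻¹ • ((1 - p) * e * p * (e * (1 - p)))
          + (α⁻¹ * α⁻¹) • ((1 - p) * e * p * (e * (p * e * (1 - p)))) := by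
      simp only [sub_mul, mul_sub, smul_mul_assoc, mul_smul_comm, smul_smul, smul_sub,
        mul_assoc]
      abel
    rw [expand]
    have t1 : (1 - p) * e * (1 - p) = e - p * e - e * p + α • p := by
      rw [sub_mul, one_mul, mul_sub, mul_one, sub_mul, hpep]
      abel
    have t3 : (1 - p) * e * p * (e * (1 - p)) = e * p * e - α • (e * p) - α • (p * e)
        + (α * α) • p := by
      calc (1 - p) * e * p * (e * (1 - p))
          = (e * p - α • p) * (e - e * p) := by rw [hqep, mul_sub, mul_one]
        _ = e * p * e - e * (p * e * p) - α • (p * e) + α • (p * e * p) := by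
            simp only [sub_mul, mul_sub, smul_mul_assoc, smul_sub, mul_assoc]
            abel
        _ = _ := by rw [hpep]; simp only [smul_smul, mul_smul_comm]
    have t2 : (1 - p) * e * (p * e * (1 - p)) = e * p * e - α • (e * p) - α • (p * e)
        + (α * α) • p := by
      calc (1 - p) * e * (p * e * (1 - p))
          = (1 - p) * e * p * (e * (1 - p)) := by simp only [mul_assoc]
        _ = _ := t3
    have t4 : (1 - p) * e * p * (e * (p * e * (1 - p)))
        = α • (e * p * e - α • (e * p) - α • (p * e) + (α * α) • p) := by
      calc (1 - p) * e * p * (e * (p * e * (1 - p)))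
          = ((1 - p) * e) * (p * e * p) * (e * (1 - p)) := by simp only [mul_assoc]
        _ = α • ((1 - p) * e * p * (e * (1 - p))) := by
            rw [hpep, mul_smul_comm, smul_mul_assoc]
        _ = _ := by rw [t3]
    rw [t1, t2, t3, t4]
    match_scalars <;> field_simp <;> ring
  refine ⟨part1, key, ?_⟩
  have hsy : star y = ystar := by
    rw [hy', hystar', star_sub, star_smul, star_mul, star_mul, hp.star_eq, he.star_eq,
      star_sub, star_one, hp.star_eq, star_trivial, mul_assoc]
  have hpos : 0 ≤ y * e * star y := star_right_conjugate_nonneg he0 y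
  rwa [hsy, key] at hpos
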